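/- (Equivalent definition of the total Sobol' index, valid with independent or dependent variables.) For every nonempty u ⊆ {1,…,p}, T_u = 1 − Var(E[f | σ(x_{∼u})])/Var(f) = E[Var(f | σ(x_{∼u}))]/Var(f), where Var(f | σ(x_{∼u})) = E[f² | σ(x_{∼u})] − (E[f | σ(x_{∼u})])². -/

import Mathlib

open MeasureTheory ProbabilityTheory

/-- The sub-σ-algebra generated by the coordinates in `v`. -/
def coordSigma {p : ℕ} (Ω : Fin p → Type*) [∀ i, MeasurableSpace (Ω i)]
    (v : Finset (Fin p)) : MeasurableSpace (∀ i, Ω i) :=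
  ⨆ i ∈ v, MeasurableSpace.comap (fun x : ∀ j, Ω j => x i) inferInstance

/-- The recursively defined (generalized ANOVA) components `f_v`. -/
noncomputable def anovaComp {p : ℕ} {Ω : Fin p → Type*} [∀ i, MeasurableSpace (Ω i)]
    (μ : Measure (∀ i, Ω i)) (f : (∀ i, Ω i) → ℝ) : Finset (Fin p) → (∀ i, Ω i) → ℝ
  | v =>
    if v = ∅ then fun _ => ∫ x, f x ∂μ
    else μ[f | coordSigma Ω v] - ∑ w ∈ v.ssubsets.attach, anovaComp μ f w.1
  termination_by v => v.card
  decreasing_by exact Finset.card_lt_card (Finset.mem_ssubsets.mp w.2)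

/-- Variance (`‖f - f₀‖₂²`). -/
noncomputable def fVar {α : Type*} [MeasurableSpace α] (μ : Measure α) (f : α → ℝ) : ℝ :=
  ∫ x, (f x - ∫ y, f y ∂μ) ^ 2 ∂μ

/-- Covariance. -/
noncomputable def fCov {α : Type*} [MeasurableSpace α] (μ : Measure α) (g f : α → ℝ) : ℝ :=
  ∫ x, (g x - ∫ y, g y ∂μ) * (f x - ∫ y, f y ∂μ) ∂μ

/-- Sobol' index `S_v`. -/
noncomputable def sobolIndex {p : ℕ} {Ω : Fin p → Type*} [∀ i, MeasurableSpace (Ω i)]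
    (μ : Measure (∀ i, Ω i)) (f : (∀ i, Ω i) → ℝ) (v : Finset (Fin p)) : ℝ :=
  fCov μ (anovaComp μ f v) f / fVar μ f

/-- Total Sobol' index `T_u`. -/
noncomputable def totalSobolIndex {p : ℕ} {Ω : Fin p → Type*} [∀ i, MeasurableSpace (Ω i)]
    (μ : Measure (∀ i, Ω i)) (f : (∀ i, Ω i) → ℝ) (u : Finset (Fin p)) : ℝ :=
  ∑ v ∈ Finset.univ.powerset.filter (fun v => (v ∩ u).Nonempty), sobolIndex μ f v


section Aux

variable {α : Type*} {m : MeasurableSpace α} {m0 : MeasurableSpace α} {μ : Measure α}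

lemma memℒp_two_condexp [IsProbabilityMeasure μ] (hm : m ≤ m0) {f : α → ℝ} (hf : MemLp f 2 μ) :
    MemLp (μ[f|m]) 2 μ := by
  haveI : SigmaFinite (μ.trim hm) := inferInstance
  have hae : (condExpL2 ℝ ℝ hm (hf.toLp f) : α → ℝ) =ᵐ[μ] μ[f|m] := by
    refine ae_eq_condExp_of_forall_setIntegral_eq hm (hf.integrable one_le_two)
      (fun s _ hμs => integrableOn_condExpL2_of_measure_ne_top hm hμs.ne _)
      (fun s hs hμs => ?_) (aestronglyMeasurable_condExpL2 hm _)
    rw [integral_condExpL2_eq hm (hf.toLp f) hs hμs.ne]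
    exact integral_congr_ae (ae_restrict_of_ae (hf.coeFn_toLp))
  exact (Lp.memLp _).ae_eq hae

lemma integrable_mul_of_memℒp_two {g f : α → ℝ} (hg : MemLp g 2 μ) (hf : MemLp f 2 μ) :
    Integrable (fun x => g x * f x) μ := by
  have h : MemLp (g • f) 1 μ := hf.smul hg (hpqr := ⟨by simp [ENNReal.inv_two_add_inv_two]⟩)
  exact memLp_one_iff_integrable.mp h

end Aux

section Aux2

variable {α : Type*} {m : MeasurableSpace α} {m0 : MeasurableSpace α} {μ : Measure α}

lemma fVar_eq_integral_sq_sub [IsProbabilityMeasure μ] {f : α → ℝ} (hf : MemLp f 2 μ) :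
    fVar μ f = (∫ x, f x ^ 2 ∂μ) - (∫ x, f x ∂μ) ^ 2 := by
  have hint : Integrable f μ := hf.integrable one_le_two
  have h : ∀ x, (f x - ∫ y, f y ∂μ) ^ 2
      = f x ^ 2 - (2 * ∫ y, f y ∂μ) * f x + (∫ y, f y ∂μ) ^ 2 := fun x => by ring
  have i1 : Integrable (fun x => f x ^ 2 - (2 * ∫ y, f y ∂μ) * f x) μ :=
    (hf.integrable_sq).sub (hint.const_mul _)
  rw [fVar]
  simp_rw [h]
  rw [integral_add i1 (integrable_const _),
      integral_sub hf.integrable_sq (hint.const_mul _), integral_const_mul, integral_const]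
  simp [measure_univ]
  ring

lemma fCov_eq_integral_mul_sub [IsProbabilityMeasure μ] {g f : α → ℝ} (hg : MemLp g 2 μ)
    (hf : MemLp f 2 μ) :
    fCov μ g f = (∫ x, g x * f x ∂μ) - (∫ x, g x ∂μ) * (∫ x, f x ∂μ) := by
  have hgi : Integrable g μ := hg.integrable one_le_two
  have hfi : Integrable f μ := hf.integrable one_le_two
  have h : ∀ x, (g x - ∫ y, g y ∂μ) * (f x - ∫ y, f y ∂μ)
      = g x * f x - ((∫ y, f y ∂μ) * g x + (∫ y, g y ∂μ) * f x)
        + (∫ y, g y ∂μ) * (∫ y, f y ∂μ) := fun x => by ring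
  have i2 : Integrable (fun x => (∫ y, f y ∂μ) * g x + (∫ y, g y ∂μ) * f x) μ :=
    (hgi.const_mul _).add (hfi.const_mul _)
  have i1 : Integrable
      (fun x => g x * f x - ((∫ y, f y ∂μ) * g x + (∫ y, g y ∂μ) * f x)) μ :=
    (integrable_mul_of_memℒp_two hg hf).sub i2
  rw [fCov]
  simp_rw [h]
  rw [integral_add i1 (integrable_const _),
      integral_sub (integrable_mul_of_memℒp_two hg hf) i2,
      integral_add (hgi.const_mul _) (hfi.const_mul _), integral_const_mul, integral_const_mul,
      integral_const]
  simp [measure_univ]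
  ring

lemma fCov_congr_left {g₁ g₂ f : α → ℝ} (h : g₁ =ᵐ[μ] g₂) : fCov μ g₁ f = fCov μ g₂ f := by
  have hi : ∫ x, g₁ x ∂μ = ∫ x, g₂ x ∂μ := integral_congr_ae h
  rw [fCov, fCov, hi]
  refine integral_congr_ae (h.mono fun x hx => ?_)
  dsimp only
  rw [hx]

lemma fCov_self [IsProbabilityMeasure μ] (f : α → ℝ) : fCov μ f f = fVar μ f := by
  rw [fCov, fVar]
  simp_rw [pow_two]

lemma fCov_condexp [IsProbabilityMeasure μ] (hm : m ≤ m0) {f : α → ℝ} (hf : MemLp f 2 μ) :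
    fCov μ (μ[f|m]) f = fVar μ (μ[f|m]) := by
  haveI : SigmaFinite (μ.trim hm) := inferInstance
  have hg := memℒp_two_condexp hm hf
  have hint : Integrable (fun x => (μ[f|m]) x * f x) μ := integrable_mul_of_memℒp_two hg hf
  have hpull : μ[(μ[f|m]) * f|m] =ᵐ[μ] (μ[f|m]) * μ[f|m] :=
    condExp_mul_of_stronglyMeasurable_left stronglyMeasurable_condExp hint (hf.integrable one_le_two)
  have hmul : ∫ x, (μ[f|m]) x * f x ∂μ = ∫ x, ((μ[f|m]) x) ^ 2 ∂μ := by
    calc ∫ x, (μ[f|m]) x * f x ∂μ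
        = ∫ x, (μ[(μ[f|m]) * f|m]) x ∂μ := (integral_condExp hm).symm
      _ = ∫ x, ((μ[f|m]) x) ^ 2 ∂μ := by
          refine integral_congr_ae (hpull.mono fun x hx => ?_)
          simp only [Pi.mul_apply] at hx
          dsimp only
          rw [hx, pow_two]
  rw [fCov_eq_integral_mul_sub hg hf, fVar_eq_integral_sq_sub hg, hmul, integral_condExp hm]
  ring

lemma fCov_sum [IsProbabilityMeasure μ] {ι : Type*} (s : Finset ι) (g : ι → α → ℝ) {f : α → ℝ}
    (hg : ∀ i ∈ s, MemLp (g i) 2 μ) (hf : MemLp f 2 μ) :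
    ∑ i ∈ s, fCov μ (g i) f = fCov μ (∑ i ∈ s, g i) f := by
  have hsum : MemLp (∑ i ∈ s, g i) 2 μ := memLp_finset_sum' s hg
  have h1 : ∫ x, (∑ i ∈ s, g i) x * f x ∂μ = ∑ i ∈ s, ∫ x, g i x * f x ∂μ := by
    simp_rw [Finset.sum_apply, Finset.sum_mul]
    exact integral_finset_sum s fun i hi => integrable_mul_of_memℒp_two (hg i hi) hf
  have h2 : ∫ x, (∑ i ∈ s, g i) x ∂μ = ∑ i ∈ s, ∫ x, g i x ∂μ := by
    simp_rw [Finset.sum_apply]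
    exact integral_finset_sum s fun i hi => (hg i hi).integrable one_le_two
  calc ∑ i ∈ s, fCov μ (g i) f
      = ∑ i ∈ s, ((∫ x, g i x * f x ∂μ) - (∫ x, g i x ∂μ) * ∫ x, f x ∂μ) :=
        Finset.sum_congr rfl fun i hi => fCov_eq_integral_mul_sub (hg i hi) hf
    _ = (∫ x, (∑ i ∈ s, g i) x * f x ∂μ) - (∫ x, (∑ i ∈ s, g i) x ∂μ) * ∫ x, f x ∂μ := by
        rw [Finset.sum_sub_distrib, ← Finset.sum_mul, h1, h2]
    _ = fCov μ (∑ i ∈ s, g i) f := (fCov_eq_integral_mul_sub hsum hf).symm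

end Aux2

section Aux3

variable {p : ℕ} {Ω : Fin p → Type*} [∀ i, MeasurableSpace (Ω i)] {μ : Measure (∀ i, Ω i)}

lemma coordSigma_le (v : Finset (Fin p)) :
    coordSigma Ω v ≤ (inferInstance : MeasurableSpace (∀ i, Ω i)) := by
  refine iSup_le fun i => iSup_le fun _ => ?_
  exact measurable_iff_comap_le.mp (measurable_pi_apply i)

lemma coordSigma_univ :
    coordSigma Ω (Finset.univ) = (inferInstance : MeasurableSpace (∀ i, Ω i)) := by
  refine le_antisymm (coordSigma_le _) ?_
  refine iSup_le fun i => ?_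
  exact le_iSup₂ (f := fun i (_ : i ∈ (Finset.univ : Finset (Fin p))) =>
    MeasurableSpace.comap (fun x : ∀ j, Ω j => x i) inferInstance) i (Finset.mem_univ i)

lemma coordSigma_empty : coordSigma Ω (∅ : Finset (Fin p)) = ⊥ := by
  simp [coordSigma]

lemma memℒp_anovaComp [IsProbabilityMeasure μ] {f : (∀ i, Ω i) → ℝ} (hf : MemLp f 2 μ)
    (v : Finset (Fin p)) : MemLp (anovaComp μ f v) 2 μ := by
  induction v using Finset.strongInduction with
  | _ v ih =>
    rw [anovaComp]
    split_ifs with h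
    · exact memLp_const _
    · exact (memℒp_two_condexp (coordSigma_le v) hf).sub
        (memLp_finset_sum' _ fun w _ => ih w.1 (Finset.mem_ssubsets.mp w.2))

lemma sum_powerset_anovaComp [IsProbabilityMeasure μ] (f : (∀ i, Ω i) → ℝ)
    (s : Finset (Fin p)) :
    ∑ v ∈ s.powerset, anovaComp μ f v = μ[f | coordSigma Ω s] := by
  by_cases hs : s = ∅
  · subst hs
    rw [Finset.powerset_empty, Finset.sum_singleton, coordSigma_empty, condExp_bot,
      anovaComp, if_pos rfl]
  · have hmem : s ∉ s.ssubsets := fun h => ssubset_irrefl s (Finset.mem_ssubsets.mp h)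
    have hps : s.powerset = insert s s.ssubsets := by
      rw [Finset.ssubsets, Finset.insert_erase (Finset.mem_powerset_self s)]
    rw [hps, Finset.sum_insert hmem, anovaComp, if_neg hs,
      ← Finset.sum_attach s.ssubsets (fun w => anovaComp μ f w)]
    exact sub_add_cancel _ _

end Aux3

/-- Equivalent definition of the total Sobol' index (independent or dependent variables):
`T_u = 1 - Var(E[f|σ(x_{∼u})])/Var(f) = E[Var(f|σ(x_{∼u}))]/Var(f)`, where the conditional
variance is `Var(f|σ(x_{∼u})) = E[f²|σ(x_{∼u})] - (E[f|σ(x_{∼u})])²`. -/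
theorem totalSobolIndex_eq_total_variance_form
    {p : ℕ} (hp : 1 ≤ p) (Ω : Fin p → Type*) [∀ i, MeasurableSpace (Ω i)]
    (μ : Measure (∀ i, Ω i)) [IsProbabilityMeasure μ]
    (f : (∀ i, Ω i) → ℝ) (hf : MemLp f 2 μ)
    (hvar : 0 < fVar μ f)
    (u : Finset (Fin p)) (hu : u.Nonempty) :
    totalSobolIndex μ f u = 1 - fVar μ (μ[f | coordSigma Ω uᶜ]) / fVar μ f ∧
    totalSobolIndex μ f u =
      (∫ x, ((μ[fun y => f y ^ 2 | coordSigma Ω uᶜ]) x - ((μ[f | coordSigma Ω uᶜ]) x) ^ 2) ∂μ)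
        / fVar μ f := by
  classical
  have hm' : coordSigma Ω uᶜ ≤ (inferInstance : MeasurableSpace (∀ i, Ω i)) := coordSigma_le uᶜ
  haveI : SigmaFinite (μ.trim hm') := inferInstance
  have hV : fVar μ f ≠ 0 := ne_of_gt hvar
  have hg2 : MemLp (μ[f | coordSigma Ω uᶜ]) 2 μ := memℒp_two_condexp hm' hf
  -- total sum over all subsets
  have htotal : ∑ v ∈ (Finset.univ : Finset (Fin p)).powerset, fCov μ (anovaComp μ f v) f
      = fVar μ f := by
    rw [fCov_sum _ _ (fun v _ => memℒp_anovaComp hf v) hf, sum_powerset_anovaComp,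
      coordSigma_univ]
    have htop : μ[f | (inferInstance : MeasurableSpace (∀ i, Ω i))] =ᵐ[μ] f :=
      condExp_of_aestronglyMeasurable' le_rfl
        hf.1 (hf.integrable one_le_two)
    rw [fCov_congr_left htop, fCov_self]
  -- the complement part
  have hsub : ∑ v ∈ uᶜ.powerset, fCov μ (anovaComp μ f v) f
      = fVar μ (μ[f | coordSigma Ω uᶜ]) := by
    rw [fCov_sum _ _ (fun v _ => memℒp_anovaComp hf v) hf, sum_powerset_anovaComp]
    exact fCov_condexp hm' hf
  have hcompl : (Finset.univ : Finset (Fin p)).powerset.filter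
      (fun v => ¬(v ∩ u).Nonempty) = uᶜ.powerset := by
    ext v
    rw [Finset.mem_filter, Finset.mem_powerset, Finset.mem_powerset]
    simp only [Finset.subset_univ, true_and, Finset.not_nonempty_iff_eq_empty,
      ← Finset.disjoint_iff_inter_eq_empty]
    exact (le_compl_iff_disjoint_right).symm
  have hsplit := Finset.sum_filter_add_sum_filter_not
    (Finset.univ : Finset (Fin p)).powerset (fun v => (v ∩ u).Nonempty)
    (fun v => fCov μ (anovaComp μ f v) f)
  rw [hcompl, htotal, hsub] at hsplit
  have hkey : totalSobolIndex μ f u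
      = (fVar μ f - fVar μ (μ[f | coordSigma Ω uᶜ])) / fVar μ f := by
    rw [totalSobolIndex]
    simp_rw [sobolIndex]
    rw [← Finset.sum_div]
    congr 1
    linarith [hsplit]
  constructor
  · rw [hkey]
    field_simp
  · rw [hkey]
    congr 1
    have hgsq : Integrable (fun x => ((μ[f | coordSigma Ω uᶜ]) x) ^ 2) μ := hg2.integrable_sq
    rw [integral_sub integrable_condExp hgsq, integral_condExp hm',
      fVar_eq_integral_sq_sub hf, fVar_eq_integral_sq_sub hg2, integral_condExp hm']
    ring
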